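/- arXiv:1304.6357 — 2 statements merged into one kernel-verified Lean document; each statement's English description precedes it below -/
import Mathlib

section
/- Let d ≥ 3 and let n be an integer with 1 ≤ n ≤ d−1. There exists a constant c = c(d,n) < ∞ such that for all z₀, zₙ ∈ ℤ^d with z₀ ≠ zₙ, ∑_{z₁,…,z_{n−1} ∈ ℤ^d} ∏_{i=0}^{n−1} f(z_i − z_{i+1}) ≤ c · |z₀ − zₙ|^{−(d−n)}, where f(z) := min(1, |z|^{−(d−1)}) for z ≠ 0 and f(0) := 1, and |·| denotes the Euclidean norm. (For n = 1 the left-hand side is the single term f(z₀ − z₁) with z₁ = zₙ.) -/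
open scoped BigOperators ENNReal

/-- The natural embedding of `ℤ^d` into Euclidean space `ℝ^d`. -/
noncomputable def latticeEmbed {d : ℕ} (z : Fin d → ℤ) : EuclideanSpace ℝ (Fin d) :=
  WithLp.toLp 2 (fun i => (z i : ℝ))

/-- `f(z) = min(1, |z|^{-(d-1)})` for `z ≠ 0`, and `f(0) = 1`. -/
noncomputable def latticeKernel {d : ℕ} (z : Fin d → ℤ) : ℝ :=
  if z = 0 then 1 else min 1 (‖latticeEmbed z‖ ^ (-((d : ℝ) - 1)))

namespace Stmt0Aux

variable {d : ℕ}

/-- sup-norm of a lattice point, as a natural number -/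
def sn (z : Fin d → ℤ) : ℕ := Finset.univ.sup fun i => (z i).natAbs

/-- `max 1 (sup-norm)` -/
def M (z : Fin d → ℤ) : ℕ := max 1 (sn z)

lemma one_le_M (z : Fin d → ℤ) : 1 ≤ M z := le_max_left _ _

lemma M_cast_ne_zero (z : Fin d → ℤ) : ((M z : ℕ) : ℝ≥0∞) ≠ 0 := by
  have h := one_le_M z
  simp only [ne_eq, Nat.cast_eq_zero]
  omega

lemma sn_le_iff {z : Fin d → ℤ} {m : ℕ} : sn z ≤ m ↔ ∀ i, (z i).natAbs ≤ m :=
  Finset.sup_le_iff.trans (by simp)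

lemma sn_le_M (z : Fin d → ℤ) : sn z ≤ M z := le_max_right _ _

lemma sn_neg (z : Fin d → ℤ) : sn (-z) = sn z := by
  unfold sn; congr 1; funext i; simp

lemma M_neg (z : Fin d → ℤ) : M (-z) = M z := by unfold M; rw [sn_neg]

lemma sn_add_le (x y : Fin d → ℤ) : sn (x + y) ≤ sn x + sn y := by
  rw [sn_le_iff]
  intro i
  calc ((x + y) i).natAbs = (x i + y i).natAbs := by simp
    _ ≤ (x i).natAbs + (y i).natAbs := Int.natAbs_add_le _ _
    _ ≤ sn x + sn y := by
        gcongr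
        · exact Finset.le_sup (f := fun j => (x j).natAbs) (Finset.mem_univ i)
        · exact Finset.le_sup (f := fun j => (y j).natAbs) (Finset.mem_univ i)

lemma M_add_le (x y : Fin d → ℤ) : M (x + y) ≤ M x + M y := by
  have h := sn_add_le x y
  have h1 := sn_le_M x; have h2 := sn_le_M y
  have := one_le_M x
  unfold M at *
  omega

lemma M_triangle (x z : Fin d → ℤ) : M x ≤ M z + M (z - x) := by
  have := M_add_le z (x - z)
  have h2 : M (x - z) = M (z - x) := by rw [← M_neg, neg_sub]
  simp only [add_sub_cancel] at this
  omega

lemma sn_eq_zero_iff {z : Fin d → ℤ} : sn z = 0 ↔ z = 0 := by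
  constructor
  · intro h
    funext i
    have := sn_le_iff.mp (le_of_eq h) i
    simpa [Int.natAbs_eq_zero] using this
  · rintro rfl
    simp [sn, Int.natAbs]


/-- the box of side `2m+1` -/
noncomputable def ball (d m : ℕ) : Finset (Fin d → ℤ) :=
  Fintype.piFinset fun _ => Finset.Icc (-(m : ℤ)) m

lemma mem_ball {m : ℕ} {z : Fin d → ℤ} : z ∈ ball d m ↔ sn z ≤ m := by
  rw [ball, Fintype.mem_piFinset, sn_le_iff]
  apply forall_congr'
  intro i
  rw [Finset.mem_Icc, ← abs_le, Int.abs_eq_natAbs]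
  exact_mod_cast Iff.rfl

lemma card_ball (m : ℕ) : (ball d m).card = (2 * m + 1) ^ d := by
  rw [ball, Fintype.card_piFinset]
  simp only [Int.card_Icc]
  rw [Finset.prod_const, Finset.card_univ, Fintype.card_fin]
  congr 1
  omega

lemma pow_succ_le (b c k : ℕ) : (b + c) ^ (k + 1) ≤ b ^ (k + 1) + (k + 1) * c * (b + c) ^ k := by
  induction k with
  | zero => simpa using Nat.add_le_add_left (Nat.le_mul_of_pos_right c (Nat.succ_le_iff.mp (le_refl 1))) b
  | succ k ih =>
    have hb : b ^ (k + 1) ≤ (b + c) ^ (k + 1) := Nat.pow_le_pow_left (Nat.le_add_right b c) _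
    calc (b + c) ^ (k + 2) = (b + c) * (b + c) ^ (k + 1) := by ring
      _ ≤ (b + c) * (b ^ (k + 1) + (k + 1) * c * (b + c) ^ k) := Nat.mul_le_mul_left _ ih
      _ = b * b ^ (k + 1) + c * b ^ (k + 1) + (k + 1) * c * (b + c) ^ (k + 1) := by ring
      _ ≤ b ^ (k + 2) + c * (b + c) ^ (k + 1) + (k + 1) * c * (b + c) ^ (k + 1) := by
          have : b * b ^ (k + 1) = b ^ (k + 2) := by ring
          rw [this]
          gcongr
      _ = b ^ (k + 2) + (k + 2) * c * (b + c) ^ (k + 1) := by ring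

lemma card_shell (hd : 1 ≤ d) (m : ℕ) :
    (((ball d (m + 1)).filter fun z => sn z = m + 1)).card ≤ 2 * d * 5 ^ (d - 1) * (m + 1) ^ (d - 1) := by
  have hsub : ((ball d (m + 1)).filter fun z => sn z = m + 1) ⊆ ball d (m + 1) \ ball d m := by
    intro z hz
    rw [Finset.mem_filter] at hz
    rw [Finset.mem_sdiff]
    refine ⟨hz.1, ?_⟩
    rw [mem_ball]
    omega
  refine (Finset.card_le_card hsub).trans ?_
  rw [Finset.card_sdiff_of_subset (by intro z; rw [mem_ball, mem_ball]; omega), card_ball, card_ball]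
  obtain ⟨e, rfl⟩ : ∃ e, d = e + 1 := ⟨d - 1, by omega⟩
  have key := pow_succ_le (2 * m + 1) 2 e
  have h1 : 2 * (m + 1) + 1 = (2 * m + 1) + 2 := by omega
  rw [h1]
  have h2 : ((2 * m + 1) + 2) ^ e ≤ (5 * (m + 1)) ^ e := Nat.pow_le_pow_left (by omega) e
  have h3 : (5 * (m + 1)) ^ e = 5 ^ e * (m + 1) ^ e := Nat.mul_pow 5 (m+1) e
  simp only [Nat.add_sub_cancel]
  calc ((2 * m + 1) + 2) ^ (e + 1) - (2 * m + 1) ^ (e + 1)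
      ≤ (e + 1) * 2 * ((2 * m + 1) + 2) ^ e := by omega
    _ ≤ (e + 1) * 2 * (5 ^ e * (m + 1) ^ e) := by
        refine Nat.mul_le_mul_left _ (h2.trans (le_of_eq h3))
    _ = 2 * (e + 1) * 5 ^ e * (m + 1) ^ e := by ring

/-- the shell count constant -/
def KK (d : ℕ) : ℕ := 2 * d * 5 ^ (d - 1)

lemma master (hd : 1 ≤ d) (g : ℕ → ℝ≥0∞) :
    ∑' z : Fin d → ℤ, g (sn z) ≤ g 0 + ∑' m : ℕ, (KK d * (m + 1) ^ (d - 1) : ℕ) * g (m + 1) := by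
  have step1 : ∀ z : Fin d → ℤ, g (sn z) = ∑' m : ℕ, (if sn z = m then g m else 0) := by
    intro z
    rw [tsum_eq_single (sn z)]
    · rw [if_pos rfl]
    · intro m hm
      rw [if_neg (by omega)]
  have step2 : ∀ m : ℕ, (∑' z : Fin d → ℤ, (if sn z = m then g m else 0))
      = (((ball d m).filter fun z => sn z = m)).card * g m := by
    intro m
    rw [tsum_eq_sum (s := ball d m) (fun z hz => by
      rw [if_neg]
      intro h
      exact hz (mem_ball.mpr (le_of_eq h)))]
    rw [← Finset.sum_filter, Finset.sum_const, nsmul_eq_mul]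
  calc ∑' z : Fin d → ℤ, g (sn z) = ∑' z : Fin d → ℤ, ∑' m : ℕ, (if sn z = m then g m else 0) := by
        exact tsum_congr step1
    _ = ∑' m : ℕ, ∑' z : Fin d → ℤ, (if sn z = m then g m else 0) := ENNReal.tsum_comm
    _ = ∑' m : ℕ, ((((ball d m).filter fun z => sn z = m)).card : ℝ≥0∞) * g m := tsum_congr step2
    _ = ((((ball d 0).filter fun z => sn z = 0)).card : ℝ≥0∞) * g 0
        + ∑' m : ℕ, ((((ball d (m+1)).filter fun z => sn z = m+1)).card : ℝ≥0∞) * g (m+1) := by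
        exact tsum_eq_zero_add' ENNReal.summable
    _ ≤ g 0 + ∑' m : ℕ, (KK d * (m + 1) ^ (d - 1) : ℕ) * g (m + 1) := by
        gcongr with m
        · have : (((ball d 0).filter fun z => sn z = 0)).card ≤ 1 := by
            refine le_trans (Finset.card_le_card (Finset.filter_subset _ _)) ?_
            rw [card_ball]
            simp
          calc ((((ball d 0).filter fun z => sn z = 0)).card : ℝ≥0∞) * g 0 ≤ 1 * g 0 :=
                mul_le_mul_left (by exact_mod_cast this) _
            _ = g 0 := one_mul _
        · unfold KK
          exact_mod_cast card_shell hd m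


lemma pow_mul_inv_pow (u : ℕ) (hu : 1 ≤ u) {p q : ℕ} (h : q ≤ p) :
    ((u : ℝ≥0∞)) ^ p * ((u : ℝ≥0∞))⁻¹ ^ q = (u : ℝ≥0∞) ^ (p - q) := by
  have hu0 : (u : ℝ≥0∞) ≠ 0 := by simp; omega
  have hut : (u : ℝ≥0∞) ≠ ⊤ := ENNReal.natCast_ne_top u
  have hp : p = (p - q) + q := by omega
  rw [hp, pow_add, mul_assoc, ← mul_pow, ENNReal.mul_inv_cancel hu0 hut, one_pow, mul_one]
  congr 1
  omega

lemma inv_pow_mul_pow (u : ℕ) (hu : 1 ≤ u) {p q : ℕ} (h : q ≤ p) :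
    ((u : ℝ≥0∞))⁻¹ ^ p * ((u : ℝ≥0∞)) ^ q = ((u : ℝ≥0∞))⁻¹ ^ (p - q) := by
  have hu0 : (u : ℝ≥0∞) ≠ 0 := by simp; omega
  have hut : (u : ℝ≥0∞) ≠ ⊤ := ENNReal.natCast_ne_top u
  have hp : p = (p - q) + q := by omega
  rw [hp, pow_add, mul_assoc, ← mul_pow, ENNReal.inv_mul_cancel hu0 hut, one_pow, mul_one]
  congr 1
  omega

lemma sumB (a R : ℕ) (hd : 1 ≤ d) (ha : a + 1 ≤ d) (hR : 1 ≤ R) :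
    ∑' z : Fin d → ℤ, (if sn z ≤ R then ((M z : ℕ) : ℝ≥0∞)⁻¹ ^ a else 0)
      ≤ ((KK d + 1 : ℕ) : ℝ≥0∞) * (R : ℝ≥0∞) ^ (d - a) := by
  set g : ℕ → ℝ≥0∞ := fun m => if m ≤ R then (((max 1 m : ℕ)) : ℝ≥0∞)⁻¹ ^ a else 0 with hg
  have h0 : ∀ z : Fin d → ℤ, (if sn z ≤ R then ((M z : ℕ) : ℝ≥0∞)⁻¹ ^ a else 0) = g (sn z) := by
    intro z; rfl
  rw [tsum_congr h0]
  refine (master hd g).trans ?_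
  have hg0 : g 0 = 1 := by simp [hg]
  have hRpow : (1 : ℝ≥0∞) ≤ (R : ℝ≥0∞) ^ (d - a) := by
    refine one_le_pow_of_one_le' ?_ _
    exact_mod_cast hR
  have hterm : ∀ m : ℕ, ((KK d * (m + 1) ^ (d - 1) : ℕ) : ℝ≥0∞) * g (m + 1)
      ≤ (if m + 1 ≤ R then ((KK d : ℕ) : ℝ≥0∞) * (R : ℝ≥0∞) ^ (d - 1 - a) else 0) := by
    intro m
    by_cases h : m + 1 ≤ R
    · rw [if_pos h]
      have hmax : (max 1 (m + 1) : ℕ) = m + 1 := by omega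
      simp only [hg, if_pos h, hmax]
      push_cast
      calc ((KK d : ℝ≥0∞) * ((m:ℝ≥0∞) + 1) ^ (d - 1)) * ((m:ℝ≥0∞) + 1)⁻¹ ^ a
          = (KK d : ℝ≥0∞) * (((m:ℝ≥0∞) + 1) ^ (d - 1) * ((m:ℝ≥0∞) + 1)⁻¹ ^ a) := by ring
        _ = (KK d : ℝ≥0∞) * ((m + 1 : ℕ) : ℝ≥0∞) ^ (d - 1 - a) := by
            rw [← pow_mul_inv_pow (m + 1) (by omega) (by omega : a ≤ d - 1)]
            push_cast
            ring
        _ ≤ (KK d : ℝ≥0∞) * (R : ℝ≥0∞) ^ (d - 1 - a) := by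
            have : ((m + 1 : ℕ) : ℝ≥0∞) ≤ (R : ℝ≥0∞) := by exact_mod_cast h
            exact mul_le_mul_right (pow_le_pow_left' this _) _
    · simp [hg, h]
  calc g 0 + ∑' m : ℕ, ((KK d * (m + 1) ^ (d - 1) : ℕ) : ℝ≥0∞) * g (m + 1)
      ≤ 1 + ∑' m : ℕ, (if m + 1 ≤ R then ((KK d : ℕ) : ℝ≥0∞) * (R : ℝ≥0∞) ^ (d - 1 - a) else 0) := by
        rw [hg0]
        gcongr with m
        exact hterm m
    _ = 1 + (R : ℝ≥0∞) * (((KK d : ℕ) : ℝ≥0∞) * (R : ℝ≥0∞) ^ (d - 1 - a)) := by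
        congr 1
        rw [tsum_eq_sum (s := Finset.range R) (fun m hm => by
          rw [if_neg]
          simp only [Finset.mem_range] at hm
          omega)]
        rw [Finset.sum_ite_of_true (fun m hm => by simp only [Finset.mem_range] at hm; omega),
          Finset.sum_const, Finset.card_range, nsmul_eq_mul]
    _ ≤ (R : ℝ≥0∞) ^ (d - a) + (KK d : ℝ≥0∞) * ((R : ℝ≥0∞) * (R : ℝ≥0∞) ^ (d - 1 - a)) := by
        refine add_le_add hRpow (le_of_eq ?_)
        ring
    _ = (R : ℝ≥0∞) ^ (d - a) + (KK d : ℝ≥0∞) * (R : ℝ≥0∞) ^ (d - a) := by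
        congr 2
        rw [← pow_succ']
        congr 1
        omega
    _ = ((KK d + 1 : ℕ) : ℝ≥0∞) * (R : ℝ≥0∞) ^ (d - a) := by
        push_cast
        ring


lemma tail_sq (T : ℕ) (hT : 1 ≤ T) :
    ∑' m : ℕ, (if T ≤ m + 1 then (((m + 1 : ℕ)) : ℝ≥0∞)⁻¹ ^ 2 else 0)
      ≤ 2 * ((T : ℝ≥0∞))⁻¹ := by
  rw [ENNReal.tsum_eq_iSup_sum]
  refine iSup_le fun s => ?_
  set K : ℕ := (s.sup id) + 2 with hK
  have hsum : ∑ m ∈ s, (if T ≤ m + 1 then (((m + 1 : ℕ)) : ℝ≥0∞)⁻¹ ^ 2 else 0)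
      ≤ ∑ j ∈ Finset.Ioo (T - 1) K, ((j : ℝ≥0∞))⁻¹ ^ 2 := by
    rw [← Finset.sum_filter]
    have himg : ∑ j ∈ (s.filter fun a => T ≤ a + 1).image (fun m : ℕ => m + 1), ((j : ℝ≥0∞))⁻¹ ^ 2
        = ∑ a ∈ s.filter (fun a => T ≤ a + 1), (((a + 1 : ℕ)) : ℝ≥0∞)⁻¹ ^ 2 :=
      Finset.sum_image (fun a _ b _ h => by omega)
    rw [← himg]
    refine Finset.sum_le_sum_of_subset ?_
    intro j hj
    simp only [Finset.mem_image, Finset.mem_filter] at hj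
    obtain ⟨m, ⟨hms, hTm⟩, rfl⟩ := hj
    rw [Finset.mem_Ioo]
    have := Finset.le_sup (f := id) hms
    simp only [id] at this
    omega
  refine hsum.trans ?_
  have hcast : ∀ j ∈ Finset.Ioo (T - 1) K, ((j : ℝ≥0∞))⁻¹ ^ 2 = ENNReal.ofReal ((j ^ 2 : ℝ))⁻¹ := by
    intro j hj
    rw [Finset.mem_Ioo] at hj
    have hj1 : 1 ≤ j := by omega
    have hjpos : (0 : ℝ) < (j : ℝ) ^ 2 := by positivity
    rw [ENNReal.ofReal_inv_of_pos hjpos, ← ENNReal.inv_pow]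
    congr 1
    rw [ENNReal.ofReal_pow (by positivity), ENNReal.ofReal_natCast]
  rw [Finset.sum_congr rfl hcast, ← ENNReal.ofReal_sum_of_nonneg (fun j _ => by positivity)]
  have hreal : (∑ j ∈ Finset.Ioo (T - 1) K, ((j : ℝ) ^ 2)⁻¹) ≤ 2 / ((T - 1 : ℕ) + 1 : ℝ) :=
    sum_Ioo_inv_sq_le (T - 1) K
  have hT1 : ((T - 1 : ℕ) + 1 : ℝ) = (T : ℝ) := by
    have : T - 1 + 1 = T := by omega
    exact_mod_cast congrArg (Nat.cast : ℕ → ℝ) this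
  rw [hT1] at hreal
  refine (ENNReal.ofReal_le_ofReal hreal).trans ?_
  rw [ENNReal.ofReal_div_of_pos (by exact_mod_cast hT), ENNReal.ofReal_ofNat,
    ENNReal.ofReal_natCast, div_eq_mul_inv]

lemma sumC (T : ℕ) (hd : 1 ≤ d) (hT : 1 ≤ T) :
    ∑' z : Fin d → ℤ, (if T ≤ M z then ((M z : ℕ) : ℝ≥0∞)⁻¹ ^ (d + 1) else 0)
      ≤ ((2 * KK d + 1 : ℕ) : ℝ≥0∞) * ((T : ℝ≥0∞))⁻¹ := by
  set g : ℕ → ℝ≥0∞ := fun m => if T ≤ max 1 m then (((max 1 m : ℕ)) : ℝ≥0∞)⁻¹ ^ (d + 1) else 0 with hg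
  have h0 : ∀ z : Fin d → ℤ, (if T ≤ M z then ((M z : ℕ) : ℝ≥0∞)⁻¹ ^ (d + 1) else 0) = g (sn z) := by
    intro z; rfl
  rw [tsum_congr h0]
  refine (master hd g).trans ?_
  have hg0 : g 0 ≤ ((T : ℝ≥0∞))⁻¹ := by
    simp only [hg]
    by_cases h : T ≤ 1
    · have : T = 1 := by omega
      subst this
      simp
    · rw [if_neg (by simpa using h)]
      exact zero_le
  have hterm : ∀ m : ℕ, ((KK d * (m + 1) ^ (d - 1) : ℕ) : ℝ≥0∞) * g (m + 1)
      ≤ (KK d : ℝ≥0∞) * (if T ≤ m + 1 then (((m + 1 : ℕ)) : ℝ≥0∞)⁻¹ ^ 2 else 0) := by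
    intro m
    have hmax : (max 1 (m + 1) : ℕ) = m + 1 := by omega
    by_cases h : T ≤ m + 1
    · simp only [hg, hmax, if_pos h]
      push_cast
      refine le_of_eq ?_
      have hsplit : ((m + 1 : ℕ) : ℝ≥0∞)⁻¹ ^ (d + 1)
          = ((m + 1 : ℕ) : ℝ≥0∞)⁻¹ ^ (d - 1) * ((m + 1 : ℕ) : ℝ≥0∞)⁻¹ ^ 2 := by
        rw [← pow_add]
        congr 1
        omega
      have hcancel : ((m + 1 : ℕ) : ℝ≥0∞) ^ (d - 1) * ((m + 1 : ℕ) : ℝ≥0∞)⁻¹ ^ (d - 1) = 1 := by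
        rw [← mul_pow, ENNReal.mul_inv_cancel (by simp) (ENNReal.natCast_ne_top _), one_pow]
      push_cast at hsplit hcancel
      calc (KK d : ℝ≥0∞) * ((m:ℝ≥0∞) + 1) ^ (d - 1) * ((m:ℝ≥0∞) + 1)⁻¹ ^ (d + 1)
          = (KK d : ℝ≥0∞) * (((m:ℝ≥0∞) + 1) ^ (d - 1) * ((m:ℝ≥0∞) + 1)⁻¹ ^ (d - 1))
            * ((m:ℝ≥0∞) + 1)⁻¹ ^ 2 := by rw [hsplit]; ring
        _ = (KK d : ℝ≥0∞) * ((m:ℝ≥0∞) + 1)⁻¹ ^ 2 := by rw [hcancel]; ring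
    · simp only [hg, hmax, if_neg h, mul_zero]
      exact zero_le
  calc g 0 + ∑' m : ℕ, ((KK d * (m + 1) ^ (d - 1) : ℕ) : ℝ≥0∞) * g (m + 1)
      ≤ ((T : ℝ≥0∞))⁻¹ + ∑' m : ℕ,
          (KK d : ℝ≥0∞) * (if T ≤ m + 1 then (((m + 1 : ℕ)) : ℝ≥0∞)⁻¹ ^ 2 else 0) := by
        exact add_le_add hg0 (ENNReal.tsum_le_tsum hterm)
    _ = ((T : ℝ≥0∞))⁻¹ + (KK d : ℝ≥0∞) * ∑' m : ℕ,
          (if T ≤ m + 1 then (((m + 1 : ℕ)) : ℝ≥0∞)⁻¹ ^ 2 else 0) := by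
        rw [ENNReal.tsum_mul_left]
    _ ≤ ((T : ℝ≥0∞))⁻¹ + (KK d : ℝ≥0∞) * (2 * ((T : ℝ≥0∞))⁻¹) := by
        exact add_le_add_right (mul_le_mul_right (tail_sq T hT) _) _
    _ = ((2 * KK d + 1 : ℕ) : ℝ≥0∞) * ((T : ℝ≥0∞))⁻¹ := by
        push_cast
        ring


lemma tsum_translate (x : Fin d → ℤ) (h : (Fin d → ℤ) → ℝ≥0∞) :
    ∑' z : Fin d → ℤ, h (z - x) = ∑' z : Fin d → ℤ, h z :=
  (Equiv.subRight x).tsum_eq h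

lemma inv_le_two_mul_inv {R m : ℕ} (hR : 1 ≤ R) (h : R ≤ 2 * m) :
    ((m : ℝ≥0∞))⁻¹ ≤ 2 * ((R : ℝ≥0∞))⁻¹ := by
  have hm : 1 ≤ m := by omega
  have hR0 : (R : ℝ≥0∞) ≠ 0 := by simp; omega
  have hRt : (R : ℝ≥0∞) ≠ ⊤ := ENNReal.natCast_ne_top R
  rw [← div_eq_mul_inv, ENNReal.le_div_iff_mul_le (Or.inl hR0) (Or.inl hRt)]
  calc ((m : ℝ≥0∞))⁻¹ * R ≤ ((m : ℝ≥0∞))⁻¹ * ((2 * m : ℕ) : ℝ≥0∞) := by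
        refine mul_le_mul_right ?_ _
        exact_mod_cast h
    _ = 2 * (((m : ℝ≥0∞)) * ((m : ℝ≥0∞))⁻¹) := by push_cast; ring
    _ = 2 := by
        rw [ENNReal.mul_inv_cancel (by simp; omega) (ENNReal.natCast_ne_top m), mul_one]

lemma conv (a b : ℕ) (hd : 1 ≤ d) (ha1 : 1 ≤ a) (hb1 : 1 ≤ b) (had : a + 1 ≤ d)
    (hbd : b + 1 ≤ d) (hab : d + 1 ≤ a + b) (x : Fin d → ℤ) :
    ∑' z : Fin d → ℤ, ((M z : ℕ) : ℝ≥0∞)⁻¹ ^ a * ((M (z - x) : ℕ) : ℝ≥0∞)⁻¹ ^ b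
      ≤ ((2 ^ (d + 2) * (3 * KK d + 2) : ℕ) : ℝ≥0∞) * ((M x : ℕ) : ℝ≥0∞)⁻¹ ^ (a + b - d) := by
  set R : ℕ := M x with hRdef
  have hR1 : 1 ≤ R := one_le_M x
  set T : ℕ := (R + 1) / 2 with hTdef
  have hT1 : 1 ≤ T := by omega
  set E : ℝ≥0∞ := ((R : ℝ≥0∞))⁻¹ ^ (a + b - d) with hEdef
  set b' : ℕ := a + b - d - 1 with hb'def
  have htri : ∀ z : Fin d → ℤ, R ≤ M z + M (z - x) := fun z => M_triangle x z
  -- covering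
  have hcover : ∀ z : Fin d → ℤ,
      ((M z : ℕ) : ℝ≥0∞)⁻¹ ^ a * ((M (z - x) : ℕ) : ℝ≥0∞)⁻¹ ^ b ≤
        (if 2 * M (z - x) ≤ R then ((M z : ℕ) : ℝ≥0∞)⁻¹ ^ a * ((M (z - x) : ℕ) : ℝ≥0∞)⁻¹ ^ b else 0)
        + (if 2 * M z ≤ R then ((M z : ℕ) : ℝ≥0∞)⁻¹ ^ a * ((M (z - x) : ℕ) : ℝ≥0∞)⁻¹ ^ b else 0)
        + (if R < 2 * M z ∧ R < 2 * M (z - x) then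
            ((M z : ℕ) : ℝ≥0∞)⁻¹ ^ a * ((M (z - x) : ℕ) : ℝ≥0∞)⁻¹ ^ b else 0) := by
    intro z
    by_cases h1 : 2 * M (z - x) ≤ R
    · rw [if_pos h1]
      exact le_add_of_le_of_nonneg (le_add_of_le_of_nonneg le_rfl (zero_le)) (zero_le)
    · by_cases h2 : 2 * M z ≤ R
      · rw [if_pos h2]
        exact le_add_of_le_of_nonneg (le_add_of_nonneg_left (zero_le)) (zero_le)
      · rw [if_pos (⟨by omega, by omega⟩ : R < 2 * M z ∧ R < 2 * M (z - x))]
        exact le_add_of_nonneg_left (zero_le)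
  -- bound for t1
  have hbd1 : (∑' z : Fin d → ℤ, if 2 * M (z - x) ≤ R then
        ((M z : ℕ) : ℝ≥0∞)⁻¹ ^ a * ((M (z - x) : ℕ) : ℝ≥0∞)⁻¹ ^ b else 0)
      ≤ ((2 ^ d * (KK d + 1) : ℕ) : ℝ≥0∞) * E := by
    have hpt : ∀ z : Fin d → ℤ, (if 2 * M (z - x) ≤ R then
          ((M z : ℕ) : ℝ≥0∞)⁻¹ ^ a * ((M (z - x) : ℕ) : ℝ≥0∞)⁻¹ ^ b else 0)
        ≤ (2 * ((R : ℝ≥0∞))⁻¹) ^ a *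
          (if sn (z - x) ≤ R then ((M (z - x) : ℕ) : ℝ≥0∞)⁻¹ ^ b else 0) := by
      intro z
      by_cases h : 2 * M (z - x) ≤ R
      · have hsn : sn (z - x) ≤ R := le_trans (sn_le_M _) (by omega)
        rw [if_pos h, if_pos hsn]
        have hz : R ≤ 2 * M z := by have := htri z; omega
        exact mul_le_mul' (pow_le_pow_left' (inv_le_two_mul_inv hR1 hz) a) le_rfl
      · rw [if_neg h]
        exact zero_le
    calc (∑' z : Fin d → ℤ, if 2 * M (z - x) ≤ R then
          ((M z : ℕ) : ℝ≥0∞)⁻¹ ^ a * ((M (z - x) : ℕ) : ℝ≥0∞)⁻¹ ^ b else 0)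
        ≤ ∑' z : Fin d → ℤ, (2 * ((R : ℝ≥0∞))⁻¹) ^ a *
          (if sn (z - x) ≤ R then ((M (z - x) : ℕ) : ℝ≥0∞)⁻¹ ^ b else 0) :=
        ENNReal.tsum_le_tsum hpt
      _ = (2 * ((R : ℝ≥0∞))⁻¹) ^ a *
          ∑' z : Fin d → ℤ, (if sn (z - x) ≤ R then ((M (z - x) : ℕ) : ℝ≥0∞)⁻¹ ^ b else 0) :=
        ENNReal.tsum_mul_left
      _ = (2 * ((R : ℝ≥0∞))⁻¹) ^ a *
          ∑' z : Fin d → ℤ, (if sn z ≤ R then ((M z : ℕ) : ℝ≥0∞)⁻¹ ^ b else 0) := by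
        rw [tsum_translate x (fun y => if sn y ≤ R then ((M y : ℕ) : ℝ≥0∞)⁻¹ ^ b else 0)]
      _ ≤ (2 * ((R : ℝ≥0∞))⁻¹) ^ a * (((KK d + 1 : ℕ) : ℝ≥0∞) * (R : ℝ≥0∞) ^ (d - b)) :=
        mul_le_mul_right (sumB b R hd hbd hR1) _
      _ = ((2 ^ a * (KK d + 1) : ℕ) : ℝ≥0∞) *
          (((R : ℝ≥0∞))⁻¹ ^ a * (R : ℝ≥0∞) ^ (d - b)) := by
        rw [mul_pow]
        push_cast
        ring
      _ = ((2 ^ a * (KK d + 1) : ℕ) : ℝ≥0∞) * E := by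
        rw [inv_pow_mul_pow R hR1 (by omega : d - b ≤ a), hEdef]
        congr 2
        omega
      _ ≤ ((2 ^ d * (KK d + 1) : ℕ) : ℝ≥0∞) * E := by
        refine mul_le_mul_left ?_ _
        have : (2:ℕ) ^ a * (KK d + 1) ≤ 2 ^ d * (KK d + 1) :=
          Nat.mul_le_mul_right _ (Nat.pow_le_pow_right (by omega) (by omega))
        exact_mod_cast this
  -- bound for t2
  have hbd2 : (∑' z : Fin d → ℤ, if 2 * M z ≤ R then
        ((M z : ℕ) : ℝ≥0∞)⁻¹ ^ a * ((M (z - x) : ℕ) : ℝ≥0∞)⁻¹ ^ b else 0)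
      ≤ ((2 ^ d * (KK d + 1) : ℕ) : ℝ≥0∞) * E := by
    have hpt : ∀ z : Fin d → ℤ, (if 2 * M z ≤ R then
          ((M z : ℕ) : ℝ≥0∞)⁻¹ ^ a * ((M (z - x) : ℕ) : ℝ≥0∞)⁻¹ ^ b else 0)
        ≤ (2 * ((R : ℝ≥0∞))⁻¹) ^ b *
          (if sn z ≤ R then ((M z : ℕ) : ℝ≥0∞)⁻¹ ^ a else 0) := by
      intro z
      by_cases h : 2 * M z ≤ R
      · have hsn : sn z ≤ R := le_trans (sn_le_M _) (by omega)
        rw [if_pos h, if_pos hsn]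
        have hz : R ≤ 2 * M (z - x) := by have := htri z; omega
        calc ((M z : ℕ) : ℝ≥0∞)⁻¹ ^ a * ((M (z - x) : ℕ) : ℝ≥0∞)⁻¹ ^ b
            ≤ ((M z : ℕ) : ℝ≥0∞)⁻¹ ^ a * (2 * ((R : ℝ≥0∞))⁻¹) ^ b :=
            mul_le_mul' le_rfl (pow_le_pow_left' (inv_le_two_mul_inv hR1 hz) b)
          _ = (2 * ((R : ℝ≥0∞))⁻¹) ^ b * ((M z : ℕ) : ℝ≥0∞)⁻¹ ^ a := mul_comm _ _
      · rw [if_neg h]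
        exact zero_le
    calc (∑' z : Fin d → ℤ, if 2 * M z ≤ R then
          ((M z : ℕ) : ℝ≥0∞)⁻¹ ^ a * ((M (z - x) : ℕ) : ℝ≥0∞)⁻¹ ^ b else 0)
        ≤ ∑' z : Fin d → ℤ, (2 * ((R : ℝ≥0∞))⁻¹) ^ b *
          (if sn z ≤ R then ((M z : ℕ) : ℝ≥0∞)⁻¹ ^ a else 0) :=
        ENNReal.tsum_le_tsum hpt
      _ = (2 * ((R : ℝ≥0∞))⁻¹) ^ b *
          ∑' z : Fin d → ℤ, (if sn z ≤ R then ((M z : ℕ) : ℝ≥0∞)⁻¹ ^ a else 0) :=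
        ENNReal.tsum_mul_left
      _ ≤ (2 * ((R : ℝ≥0∞))⁻¹) ^ b * (((KK d + 1 : ℕ) : ℝ≥0∞) * (R : ℝ≥0∞) ^ (d - a)) :=
        mul_le_mul_right (sumB a R hd had hR1) _
      _ = ((2 ^ b * (KK d + 1) : ℕ) : ℝ≥0∞) *
          (((R : ℝ≥0∞))⁻¹ ^ b * (R : ℝ≥0∞) ^ (d - a)) := by
        rw [mul_pow]
        push_cast
        ring
      _ = ((2 ^ b * (KK d + 1) : ℕ) : ℝ≥0∞) * E := by
        rw [inv_pow_mul_pow R hR1 (by omega : d - a ≤ b), hEdef]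
        congr 2
        omega
      _ ≤ ((2 ^ d * (KK d + 1) : ℕ) : ℝ≥0∞) * E := by
        refine mul_le_mul_left ?_ _
        have : (2:ℕ) ^ b * (KK d + 1) ≤ 2 ^ d * (KK d + 1) :=
          Nat.mul_le_mul_right _ (Nat.pow_le_pow_right (by omega) (by omega))
        exact_mod_cast this
  -- bound for t3
  have hbd3 : (∑' z : Fin d → ℤ, if R < 2 * M z ∧ R < 2 * M (z - x) then
        ((M z : ℕ) : ℝ≥0∞)⁻¹ ^ a * ((M (z - x) : ℕ) : ℝ≥0∞)⁻¹ ^ b else 0)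
      ≤ ((2 ^ (d + 2) * (2 * KK d + 1) : ℕ) : ℝ≥0∞) * E := by
    have hpt : ∀ z : Fin d → ℤ, (if R < 2 * M z ∧ R < 2 * M (z - x) then
          ((M z : ℕ) : ℝ≥0∞)⁻¹ ^ a * ((M (z - x) : ℕ) : ℝ≥0∞)⁻¹ ^ b else 0)
        ≤ (2 * ((R : ℝ≥0∞))⁻¹) ^ b' *
          ((if T ≤ M z then ((M z : ℕ) : ℝ≥0∞)⁻¹ ^ (d + 1) else 0)
            + (if T ≤ M (z - x) then ((M (z - x) : ℕ) : ℝ≥0∞)⁻¹ ^ (d + 1) else 0)) := by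
      intro z
      by_cases h : R < 2 * M z ∧ R < 2 * M (z - x)
      · obtain ⟨hz1, hz2⟩ := h
        rw [if_pos (⟨hz1, hz2⟩ : R < 2 * M z ∧ R < 2 * M (z - x)),
          if_pos (show T ≤ M z by omega), if_pos (show T ≤ M (z - x) by omega)]
        have hmin : ((M z : ℕ) : ℝ≥0∞)⁻¹ ^ a * ((M (z - x) : ℕ) : ℝ≥0∞)⁻¹ ^ (d + 1 - a)
            ≤ ((M z : ℕ) : ℝ≥0∞)⁻¹ ^ (d + 1) + ((M (z - x) : ℕ) : ℝ≥0∞)⁻¹ ^ (d + 1) := by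
          rcases le_total (M z) (M (z - x)) with hle | hle
          · have hi : ((M (z - x) : ℕ) : ℝ≥0∞)⁻¹ ≤ ((M z : ℕ) : ℝ≥0∞)⁻¹ :=
              ENNReal.inv_le_inv.mpr (by exact_mod_cast hle)
            calc ((M z : ℕ) : ℝ≥0∞)⁻¹ ^ a * ((M (z - x) : ℕ) : ℝ≥0∞)⁻¹ ^ (d + 1 - a)
                ≤ ((M z : ℕ) : ℝ≥0∞)⁻¹ ^ a * ((M z : ℕ) : ℝ≥0∞)⁻¹ ^ (d + 1 - a) :=
                mul_le_mul' le_rfl (pow_le_pow_left' hi _)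
              _ = ((M z : ℕ) : ℝ≥0∞)⁻¹ ^ (d + 1) := by
                rw [← pow_add]
                congr 1
                omega
              _ ≤ _ := le_self_add
          · have hi : ((M z : ℕ) : ℝ≥0∞)⁻¹ ≤ ((M (z - x) : ℕ) : ℝ≥0∞)⁻¹ :=
              ENNReal.inv_le_inv.mpr (by exact_mod_cast hle)
            calc ((M z : ℕ) : ℝ≥0∞)⁻¹ ^ a * ((M (z - x) : ℕ) : ℝ≥0∞)⁻¹ ^ (d + 1 - a)
                ≤ ((M (z - x) : ℕ) : ℝ≥0∞)⁻¹ ^ a * ((M (z - x) : ℕ) : ℝ≥0∞)⁻¹ ^ (d + 1 - a) :=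
                mul_le_mul' (pow_le_pow_left' hi _) le_rfl
              _ = ((M (z - x) : ℕ) : ℝ≥0∞)⁻¹ ^ (d + 1) := by
                rw [← pow_add]
                congr 1
                omega
              _ ≤ _ := le_add_self
        have hfac : ((M (z - x) : ℕ) : ℝ≥0∞)⁻¹ ^ b
            ≤ (2 * ((R : ℝ≥0∞))⁻¹) ^ b' * ((M (z - x) : ℕ) : ℝ≥0∞)⁻¹ ^ (d + 1 - a) := by
          have hb : b = b' + (d + 1 - a) := by omega
          rw [hb, pow_add]
          exact mul_le_mul' (pow_le_pow_left' (inv_le_two_mul_inv hR1 (by omega)) b') le_rfl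
        calc ((M z : ℕ) : ℝ≥0∞)⁻¹ ^ a * ((M (z - x) : ℕ) : ℝ≥0∞)⁻¹ ^ b
            ≤ ((M z : ℕ) : ℝ≥0∞)⁻¹ ^ a *
              ((2 * ((R : ℝ≥0∞))⁻¹) ^ b' * ((M (z - x) : ℕ) : ℝ≥0∞)⁻¹ ^ (d + 1 - a)) :=
            mul_le_mul' le_rfl hfac
          _ = (2 * ((R : ℝ≥0∞))⁻¹) ^ b' *
              (((M z : ℕ) : ℝ≥0∞)⁻¹ ^ a * ((M (z - x) : ℕ) : ℝ≥0∞)⁻¹ ^ (d + 1 - a)) := by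
            ring
          _ ≤ _ := mul_le_mul' le_rfl hmin
      · rw [if_neg h]
        exact zero_le
    have hsC1 : (∑' z : Fin d → ℤ, if T ≤ M z then ((M z : ℕ) : ℝ≥0∞)⁻¹ ^ (d + 1) else 0)
        ≤ ((2 * KK d + 1 : ℕ) : ℝ≥0∞) * ((T : ℝ≥0∞))⁻¹ := sumC T hd hT1
    have hsC2 : (∑' z : Fin d → ℤ, if T ≤ M (z - x) then ((M (z - x) : ℕ) : ℝ≥0∞)⁻¹ ^ (d + 1) else 0)
        ≤ ((2 * KK d + 1 : ℕ) : ℝ≥0∞) * ((T : ℝ≥0∞))⁻¹ := by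
      rw [tsum_translate x (fun y => if T ≤ M y then ((M y : ℕ) : ℝ≥0∞)⁻¹ ^ (d + 1) else 0)]
      exact sumC T hd hT1
    have hTinv : ((T : ℝ≥0∞))⁻¹ ≤ 2 * ((R : ℝ≥0∞))⁻¹ := inv_le_two_mul_inv hR1 (by omega)
    calc (∑' z : Fin d → ℤ, if R < 2 * M z ∧ R < 2 * M (z - x) then
          ((M z : ℕ) : ℝ≥0∞)⁻¹ ^ a * ((M (z - x) : ℕ) : ℝ≥0∞)⁻¹ ^ b else 0)
        ≤ ∑' z : Fin d → ℤ, (2 * ((R : ℝ≥0∞))⁻¹) ^ b' *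
          ((if T ≤ M z then ((M z : ℕ) : ℝ≥0∞)⁻¹ ^ (d + 1) else 0)
            + (if T ≤ M (z - x) then ((M (z - x) : ℕ) : ℝ≥0∞)⁻¹ ^ (d + 1) else 0)) :=
        ENNReal.tsum_le_tsum hpt
      _ = (2 * ((R : ℝ≥0∞))⁻¹) ^ b' *
          ∑' z : Fin d → ℤ, ((if T ≤ M z then ((M z : ℕ) : ℝ≥0∞)⁻¹ ^ (d + 1) else 0)
            + (if T ≤ M (z - x) then ((M (z - x) : ℕ) : ℝ≥0∞)⁻¹ ^ (d + 1) else 0)) :=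
        ENNReal.tsum_mul_left
      _ = (2 * ((R : ℝ≥0∞))⁻¹) ^ b' *
          ((∑' z : Fin d → ℤ, (if T ≤ M z then ((M z : ℕ) : ℝ≥0∞)⁻¹ ^ (d + 1) else 0))
            + ∑' z : Fin d → ℤ, (if T ≤ M (z - x) then ((M (z - x) : ℕ) : ℝ≥0∞)⁻¹ ^ (d + 1) else 0)) := by
        rw [ENNReal.tsum_add]
      _ ≤ (2 * ((R : ℝ≥0∞))⁻¹) ^ b' *
          (((2 * KK d + 1 : ℕ) : ℝ≥0∞) * ((T : ℝ≥0∞))⁻¹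
            + ((2 * KK d + 1 : ℕ) : ℝ≥0∞) * ((T : ℝ≥0∞))⁻¹) :=
        mul_le_mul' le_rfl (add_le_add hsC1 hsC2)
      _ ≤ (2 * ((R : ℝ≥0∞))⁻¹) ^ b' *
          (((2 * KK d + 1 : ℕ) : ℝ≥0∞) * (2 * ((R : ℝ≥0∞))⁻¹)
            + ((2 * KK d + 1 : ℕ) : ℝ≥0∞) * (2 * ((R : ℝ≥0∞))⁻¹)) :=
        mul_le_mul' le_rfl (add_le_add (mul_le_mul' le_rfl hTinv) (mul_le_mul' le_rfl hTinv))
      _ = ((2 ^ (b' + 2) * (2 * KK d + 1) : ℕ) : ℝ≥0∞) * (((R : ℝ≥0∞))⁻¹ ^ b' * ((R : ℝ≥0∞))⁻¹) := by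
        rw [mul_pow]
        push_cast
        ring
      _ = ((2 ^ (b' + 2) * (2 * KK d + 1) : ℕ) : ℝ≥0∞) * E := by
        rw [← pow_succ, hEdef]
        congr 2
        omega
      _ ≤ ((2 ^ (d + 2) * (2 * KK d + 1) : ℕ) : ℝ≥0∞) * E := by
        refine mul_le_mul_left ?_ _
        have : (2:ℕ) ^ (b' + 2) * (2 * KK d + 1) ≤ 2 ^ (d + 2) * (2 * KK d + 1) :=
          Nat.mul_le_mul_right _ (Nat.pow_le_pow_right (by omega) (by omega))
        exact_mod_cast this
  -- combine
  calc (∑' z : Fin d → ℤ, ((M z : ℕ) : ℝ≥0∞)⁻¹ ^ a * ((M (z - x) : ℕ) : ℝ≥0∞)⁻¹ ^ b)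
      ≤ ∑' z : Fin d → ℤ,
        ((if 2 * M (z - x) ≤ R then ((M z : ℕ) : ℝ≥0∞)⁻¹ ^ a * ((M (z - x) : ℕ) : ℝ≥0∞)⁻¹ ^ b else 0)
          + (if 2 * M z ≤ R then ((M z : ℕ) : ℝ≥0∞)⁻¹ ^ a * ((M (z - x) : ℕ) : ℝ≥0∞)⁻¹ ^ b else 0)
          + (if R < 2 * M z ∧ R < 2 * M (z - x) then
              ((M z : ℕ) : ℝ≥0∞)⁻¹ ^ a * ((M (z - x) : ℕ) : ℝ≥0∞)⁻¹ ^ b else 0)) :=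
      ENNReal.tsum_le_tsum hcover
    _ = (∑' z : Fin d → ℤ, if 2 * M (z - x) ≤ R then
          ((M z : ℕ) : ℝ≥0∞)⁻¹ ^ a * ((M (z - x) : ℕ) : ℝ≥0∞)⁻¹ ^ b else 0)
        + (∑' z : Fin d → ℤ, if 2 * M z ≤ R then
          ((M z : ℕ) : ℝ≥0∞)⁻¹ ^ a * ((M (z - x) : ℕ) : ℝ≥0∞)⁻¹ ^ b else 0)
        + (∑' z : Fin d → ℤ, if R < 2 * M z ∧ R < 2 * M (z - x) then
          ((M z : ℕ) : ℝ≥0∞)⁻¹ ^ a * ((M (z - x) : ℕ) : ℝ≥0∞)⁻¹ ^ b else 0) := by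
      rw [ENNReal.tsum_add, ENNReal.tsum_add]
    _ ≤ ((2 ^ d * (KK d + 1) : ℕ) : ℝ≥0∞) * E + ((2 ^ d * (KK d + 1) : ℕ) : ℝ≥0∞) * E
        + ((2 ^ (d + 2) * (2 * KK d + 1) : ℕ) : ℝ≥0∞) * E :=
      add_le_add (add_le_add hbd1 hbd2) hbd3
    _ = ((2 ^ d * (KK d + 1) + 2 ^ d * (KK d + 1) + 2 ^ (d + 2) * (2 * KK d + 1) : ℕ) : ℝ≥0∞) * E := by
      push_cast
      ring
    _ ≤ ((2 ^ (d + 2) * (3 * KK d + 2) : ℕ) : ℝ≥0∞) * E := by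
      refine mul_le_mul_left ?_ _
      have key : 2 ^ d * (KK d + 1) + 2 ^ d * (KK d + 1) + 2 ^ (d + 2) * (2 * KK d + 1)
          ≤ 2 ^ (d + 2) * (3 * KK d + 2) := by
        have h2 : (2:ℕ) ^ (d + 2) = 2 ^ d * 4 := by rw [pow_add]; norm_num
        rw [h2]
        calc 2 ^ d * (KK d + 1) + 2 ^ d * (KK d + 1) + 2 ^ d * 4 * (2 * KK d + 1)
            = 2 ^ d * (10 * KK d + 6) := by ring
          _ ≤ 2 ^ d * (4 * (3 * KK d + 2)) := Nat.mul_le_mul_left _ (by omega)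
          _ = 2 ^ d * 4 * (3 * KK d + 2) := by ring
      exact_mod_cast key


noncomputable def kerE (z : Fin d → ℤ) : ℝ≥0∞ := ENNReal.ofReal (latticeKernel z)

lemma latticeKernel_nonneg (z : Fin d → ℤ) : 0 ≤ latticeKernel z := by
  unfold latticeKernel
  split
  · norm_num
  · refine le_min (by norm_num) (Real.rpow_nonneg (norm_nonneg _) _)

lemma coord_le_norm (z : Fin d → ℤ) (i : Fin d) : |(z i : ℝ)| ≤ ‖latticeEmbed z‖ := by
  rw [EuclideanSpace.norm_eq]
  rw [← Real.sqrt_sq_eq_abs]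
  refine Real.sqrt_le_sqrt ?_
  have : (z i : ℝ) ^ 2 = ‖latticeEmbed z i‖ ^ 2 := by
    unfold latticeEmbed
    rw [Real.norm_eq_abs, sq_abs]
  rw [this]
  exact Finset.single_le_sum (f := fun j => ‖latticeEmbed z j‖ ^ 2)
    (fun j _ => by positivity) (Finset.mem_univ i)

lemma sn_le_norm (hd : 1 ≤ d) (z : Fin d → ℤ) : (sn z : ℝ) ≤ ‖latticeEmbed z‖ := by
  have hne : (Finset.univ : Finset (Fin d)).Nonempty := by
    refine Finset.univ_nonempty_iff.mpr ?_
    exact Fin.pos_iff_nonempty.mp (by omega)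
  obtain ⟨i, _, hi⟩ := Finset.exists_mem_eq_sup Finset.univ hne fun j => (z j).natAbs
  rw [sn, hi]
  calc (((z i).natAbs : ℕ) : ℝ) = |(z i : ℝ)| := by
        rw [Nat.cast_natAbs]
        push_cast
        rfl
    _ ≤ ‖latticeEmbed z‖ := coord_le_norm z i

lemma norm_le_d_mul_M (hd : 1 ≤ d) (z : Fin d → ℤ) :
    ‖latticeEmbed z‖ ≤ (d : ℝ) * (M z : ℕ) := by
  rw [EuclideanSpace.norm_eq]
  have hbound : ∑ i : Fin d, ‖latticeEmbed z i‖ ^ 2 ≤ ((d : ℝ) * (M z : ℕ)) ^ 2 := by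
    have hsingle : ∀ i : Fin d, ‖latticeEmbed z i‖ ^ 2 ≤ ((M z : ℕ) : ℝ) ^ 2 := by
      intro i
      have h1 : ‖latticeEmbed z i‖ = (((z i).natAbs : ℕ) : ℝ) := by
        unfold latticeEmbed
        rw [Real.norm_eq_abs, Nat.cast_natAbs]
        push_cast
        rfl
      rw [h1]
      have h2 : (z i).natAbs ≤ M z := le_trans (sn_le_iff.mp le_rfl i) (sn_le_M z)
      have : (((z i).natAbs : ℕ) : ℝ) ≤ ((M z : ℕ) : ℝ) := by exact_mod_cast h2
      exact pow_le_pow_left₀ (by positivity) this 2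
    calc ∑ i : Fin d, ‖latticeEmbed z i‖ ^ 2 ≤ ∑ _i : Fin d, ((M z : ℕ) : ℝ) ^ 2 :=
        Finset.sum_le_sum fun i _ => hsingle i
      _ = (d : ℝ) * ((M z : ℕ) : ℝ) ^ 2 := by
        rw [Finset.sum_const, Finset.card_univ, Fintype.card_fin, nsmul_eq_mul]
      _ ≤ ((d : ℝ) * (M z : ℕ)) ^ 2 := by
        have hd1 : (1 : ℝ) ≤ (d : ℝ) := by exact_mod_cast hd
        rw [mul_pow]
        have hdd : (0:ℝ) ≤ (d : ℝ) ^ 2 - (d : ℝ) := by nlinarith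
        nlinarith [mul_nonneg hdd (sq_nonneg ((M z : ℕ) : ℝ))]
  calc √(∑ i : Fin d, ‖latticeEmbed z i‖ ^ 2) ≤ √(((d : ℝ) * (M z : ℕ)) ^ 2) :=
      Real.sqrt_le_sqrt hbound
    _ = (d : ℝ) * (M z : ℕ) := Real.sqrt_sq (by positivity)

lemma kerE_le (hd : 1 ≤ d) (z : Fin d → ℤ) :
    kerE z ≤ ((M z : ℕ) : ℝ≥0∞)⁻¹ ^ (d - 1) := by
  by_cases h : z = 0
  · subst h
    have hM : M (0 : Fin d → ℤ) = 1 := by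
      rw [M, sn_eq_zero_iff.mpr rfl]
      omega
    rw [kerE, latticeKernel, if_pos rfl, hM]
    simp
  · have hsn : 1 ≤ sn z := by
      rcases Nat.eq_zero_or_pos (sn z) with h0 | h0
      · exact absurd (sn_eq_zero_iff.mp h0) h
      · exact h0
    have hM : M z = sn z := max_eq_right hsn
    have hnorm1 : (1 : ℝ) ≤ ‖latticeEmbed z‖ := by
      calc (1 : ℝ) ≤ (sn z : ℝ) := by exact_mod_cast hsn
        _ ≤ ‖latticeEmbed z‖ := sn_le_norm hd z
    have hnorm0 : (0 : ℝ) < ‖latticeEmbed z‖ := by linarith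
    rw [kerE, latticeKernel, if_neg h]
    have hexp : ‖latticeEmbed z‖ ^ (-((d : ℝ) - 1)) = (‖latticeEmbed z‖ ^ (d - 1 : ℕ))⁻¹ := by
      rw [Real.rpow_neg (le_of_lt hnorm0)]
      congr 1
      rw [← Real.rpow_natCast]
      congr 1
      push_cast [Nat.cast_sub hd]
      ring
    have hmono : ((M z : ℕ) : ℝ) ^ (d - 1 : ℕ) ≤ ‖latticeEmbed z‖ ^ (d - 1 : ℕ) := by
      refine pow_le_pow_left₀ (by positivity) ?_ _
      rw [hM]
      exact sn_le_norm hd z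
    calc ENNReal.ofReal (min 1 (‖latticeEmbed z‖ ^ (-((d : ℝ) - 1))))
        ≤ ENNReal.ofReal ((‖latticeEmbed z‖ ^ (d - 1 : ℕ))⁻¹) := by
          rw [hexp]
          exact ENNReal.ofReal_le_ofReal (min_le_right _ _)
      _ = (ENNReal.ofReal (‖latticeEmbed z‖ ^ (d - 1 : ℕ)))⁻¹ := by
        rw [ENNReal.ofReal_inv_of_pos (by positivity)]
      _ ≤ (ENNReal.ofReal (((M z : ℕ) : ℝ) ^ (d - 1 : ℕ)))⁻¹ := by
        exact ENNReal.inv_le_inv.mpr (ENNReal.ofReal_le_ofReal hmono)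
      _ = ((M z : ℕ) : ℝ≥0∞)⁻¹ ^ (d - 1) := by
        rw [ENNReal.ofReal_pow (by positivity), ENNReal.ofReal_natCast, ENNReal.inv_pow]


lemma path_step (n : ℕ) (z₀ zN : Fin d → ℤ) :
    (∑' w : {w : Fin (n + 2) → Fin d → ℤ // w 0 = z₀ ∧ w (Fin.last (n + 1)) = zN},
        ∏ i : Fin (n + 1), kerE (w.1 i.castSucc - w.1 i.succ))
      ≤ ∑' z₁ : Fin d → ℤ, kerE (z₀ - z₁) *
          ∑' w : {w : Fin (n + 1) → Fin d → ℤ // w 0 = z₁ ∧ w (Fin.last n) = zN},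
            ∏ i : Fin n, kerE (w.1 i.castSucc - w.1 i.succ) := by
  classical
  set G : (Σ z₁ : Fin d → ℤ,
      {w : Fin (n + 1) → Fin d → ℤ // w 0 = z₁ ∧ w (Fin.last n) = zN}) → ℝ≥0∞ :=
    fun p => kerE (z₀ - p.1) * ∏ i : Fin n, kerE (p.2.1 i.castSucc - p.2.1 i.succ) with hG
  have hf0 : ∀ w : {w : Fin (n + 2) → Fin d → ℤ // w 0 = z₀ ∧ w (Fin.last (n + 1)) = zN},
      (fun j : Fin (n + 1) => w.1 j.succ) 0 = w.1 1 := by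
    intro w
    simp [Fin.succ_zero_eq_one]
  have hflast : ∀ w : {w : Fin (n + 2) → Fin d → ℤ // w 0 = z₀ ∧ w (Fin.last (n + 1)) = zN},
      (fun j : Fin (n + 1) => w.1 j.succ) (Fin.last n) = zN := by
    intro w
    simp only [Fin.succ_last]
    exact w.2.2
  set f : {w : Fin (n + 2) → Fin d → ℤ // w 0 = z₀ ∧ w (Fin.last (n + 1)) = zN} →
      (Σ z₁ : Fin d → ℤ, {w : Fin (n + 1) → Fin d → ℤ // w 0 = z₁ ∧ w (Fin.last n) = zN}) :=
    fun w => ⟨w.1 1, ⟨fun j => w.1 j.succ, hf0 w, hflast w⟩⟩ with hfdef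
  have hinj : Function.Injective f := by
    intro w w' h
    have h2 : (fun j : Fin (n + 1) => w.1 j.succ) = (fun j : Fin (n + 1) => w'.1 j.succ) := by
      have := congrArg (fun p : (Σ z₁ : Fin d → ℤ,
          {w : Fin (n + 1) → Fin d → ℤ // w 0 = z₁ ∧ w (Fin.last n) = zN}) => p.2.1) h
      exact this
    apply Subtype.ext
    funext i
    induction i using Fin.cases with
    | zero => rw [w.2.1, w'.2.1]
    | succ j => exact congrFun h2 j
  have hPG : ∀ w : {w : Fin (n + 2) → Fin d → ℤ // w 0 = z₀ ∧ w (Fin.last (n + 1)) = zN},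
      (∏ i : Fin (n + 1), kerE (w.1 i.castSucc - w.1 i.succ)) = G (f w) := by
    intro w
    rw [hG, hfdef]
    simp only
    rw [Fin.prod_univ_succ, Fin.castSucc_zero, Fin.succ_zero_eq_one, w.2.1]
    refine congrArg₂ (· * ·) rfl ?_
    refine Finset.prod_congr rfl fun i _ => ?_
    rw [← Fin.succ_castSucc]
  calc (∑' w : {w : Fin (n + 2) → Fin d → ℤ // w 0 = z₀ ∧ w (Fin.last (n + 1)) = zN},
        ∏ i : Fin (n + 1), kerE (w.1 i.castSucc - w.1 i.succ))
      = ∑' w : {w : Fin (n + 2) → Fin d → ℤ // w 0 = z₀ ∧ w (Fin.last (n + 1)) = zN},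
        G (f w) := tsum_congr hPG
    _ ≤ ∑' p : (Σ z₁ : Fin d → ℤ,
        {w : Fin (n + 1) → Fin d → ℤ // w 0 = z₁ ∧ w (Fin.last n) = zN}), G p :=
      ENNReal.tsum_comp_le_tsum_of_injective hinj G
    _ = ∑' z₁ : Fin d → ℤ, ∑' w : {w : Fin (n + 1) → Fin d → ℤ // w 0 = z₁ ∧ w (Fin.last n) = zN},
        kerE (z₀ - z₁) * ∏ i : Fin n, kerE (w.1 i.castSucc - w.1 i.succ) :=
      ENNReal.tsum_sigma' G
    _ = ∑' z₁ : Fin d → ℤ, kerE (z₀ - z₁) *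
        ∑' w : {w : Fin (n + 1) → Fin d → ℤ // w 0 = z₁ ∧ w (Fin.last n) = zN},
          ∏ i : Fin n, kerE (w.1 i.castSucc - w.1 i.succ) := by
      refine tsum_congr fun z₁ => ?_
      rw [ENNReal.tsum_mul_left]

lemma path_bound (hd3 : 3 ≤ d) :
    ∀ n : ℕ, 1 ≤ n → n + 1 ≤ d → ∀ z₀ zN : Fin d → ℤ,
    (∑' w : {w : Fin (n + 1) → Fin d → ℤ // w 0 = z₀ ∧ w (Fin.last n) = zN},
        ∏ i : Fin n, kerE (w.1 i.castSucc - w.1 i.succ))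
      ≤ (((2 ^ (d + 2) * (3 * KK d + 2)) ^ n : ℕ) : ℝ≥0∞)
          * ((M (z₀ - zN) : ℕ) : ℝ≥0∞)⁻¹ ^ (d - n) := by
  have hd : 1 ≤ d := by omega
  intro n
  induction n with
  | zero => intro h1; exact absurd h1 (by omega)
  | succ n ih =>
    intro h1 h2 z₀ zN
    by_cases hn : n = 0
    · subst hn
      have huniq : ∀ w : {w : Fin 2 → Fin d → ℤ // w 0 = z₀ ∧ w (Fin.last 1) = zN},
          w = ⟨![z₀, zN], by simp, by simp [Fin.last]⟩ := by
        rintro ⟨w, h0, hl⟩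
        apply Subtype.ext
        funext i
        fin_cases i
        · simpa using h0
        · simpa [Fin.last] using hl
      rw [tsum_eq_single (⟨![z₀, zN], by simp, by simp [Fin.last]⟩ :
          {w : Fin 2 → Fin d → ℤ // w 0 = z₀ ∧ w (Fin.last 1) = zN})
          (fun b hb => absurd (huniq b) hb)]
      have hval : (∏ i : Fin 1, kerE ((![z₀, zN] : Fin 2 → Fin d → ℤ) i.castSucc
          - (![z₀, zN] : Fin 2 → Fin d → ℤ) i.succ)) = kerE (z₀ - zN) := by
        rw [Fin.prod_univ_one]
        congr 1
      refine hval.trans_le ?_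
      calc kerE (z₀ - zN) ≤ ((M (z₀ - zN) : ℕ) : ℝ≥0∞)⁻¹ ^ (d - 1) := kerE_le hd _
        _ ≤ (((2 ^ (d + 2) * (3 * KK d + 2)) ^ 1 : ℕ) : ℝ≥0∞)
            * ((M (z₀ - zN) : ℕ) : ℝ≥0∞)⁻¹ ^ (d - 1) := by
          refine le_mul_of_one_le_left (zero_le) ?_
          have h0 : 0 < 2 ^ (d + 2) * (3 * KK d + 2) := by positivity
          have : 1 ≤ (2 ^ (d + 2) * (3 * KK d + 2)) ^ 1 := by rw [pow_one]; omega
          exact_mod_cast this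
    · -- inductive step
      have hn1 : 1 ≤ n := by omega
      have hn2 : n + 1 ≤ d := by omega
      set C : ℕ := 2 ^ (d + 2) * (3 * KK d + 2) with hC
      calc (∑' w : {w : Fin (n + 2) → Fin d → ℤ // w 0 = z₀ ∧ w (Fin.last (n + 1)) = zN},
            ∏ i : Fin (n + 1), kerE (w.1 i.castSucc - w.1 i.succ))
          ≤ ∑' z₁ : Fin d → ℤ, kerE (z₀ - z₁) *
            ∑' w : {w : Fin (n + 1) → Fin d → ℤ // w 0 = z₁ ∧ w (Fin.last n) = zN},
              ∏ i : Fin n, kerE (w.1 i.castSucc - w.1 i.succ) := path_step n z₀ zN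
        _ ≤ ∑' z₁ : Fin d → ℤ, ((C ^ n : ℕ) : ℝ≥0∞) *
            (((M (z₀ - z₁) : ℕ) : ℝ≥0∞)⁻¹ ^ (d - 1)
              * ((M (z₁ - zN) : ℕ) : ℝ≥0∞)⁻¹ ^ (d - n)) := by
          refine ENNReal.tsum_le_tsum fun z₁ => ?_
          calc kerE (z₀ - z₁) *
              ∑' w : {w : Fin (n + 1) → Fin d → ℤ // w 0 = z₁ ∧ w (Fin.last n) = zN},
                ∏ i : Fin n, kerE (w.1 i.castSucc - w.1 i.succ)
              ≤ ((M (z₀ - z₁) : ℕ) : ℝ≥0∞)⁻¹ ^ (d - 1) *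
                (((C ^ n : ℕ) : ℝ≥0∞) * ((M (z₁ - zN) : ℕ) : ℝ≥0∞)⁻¹ ^ (d - n)) :=
              mul_le_mul' (kerE_le hd _) (ih hn1 hn2 z₁ zN)
            _ = ((C ^ n : ℕ) : ℝ≥0∞) * (((M (z₀ - z₁) : ℕ) : ℝ≥0∞)⁻¹ ^ (d - 1)
                * ((M (z₁ - zN) : ℕ) : ℝ≥0∞)⁻¹ ^ (d - n)) := by ring
        _ = ((C ^ n : ℕ) : ℝ≥0∞) * ∑' z₁ : Fin d → ℤ,
            (((M (z₀ - z₁) : ℕ) : ℝ≥0∞)⁻¹ ^ (d - 1)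
              * ((M (z₁ - zN) : ℕ) : ℝ≥0∞)⁻¹ ^ (d - n)) := ENNReal.tsum_mul_left
        _ = ((C ^ n : ℕ) : ℝ≥0∞) * ∑' z : Fin d → ℤ,
            (((M z : ℕ) : ℝ≥0∞)⁻¹ ^ (d - 1)
              * ((M (z - (z₀ - zN)) : ℕ) : ℝ≥0∞)⁻¹ ^ (d - n)) := by
          congr 1
          rw [← (Equiv.subLeft z₀).tsum_eq (fun z₁ => ((M (z₀ - z₁) : ℕ) : ℝ≥0∞)⁻¹ ^ (d - 1)
            * ((M (z₁ - zN) : ℕ) : ℝ≥0∞)⁻¹ ^ (d - n))]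
          refine tsum_congr fun z => ?_
          have e1 : z₀ - (Equiv.subLeft z₀) z = z := by
            simp [Equiv.subLeft]
          have e2 : (Equiv.subLeft z₀) z - zN = -(z - (z₀ - zN)) := by
            simp only [Equiv.subLeft, Equiv.coe_fn_mk]
            abel
          rw [e1, e2, M_neg]
        _ ≤ ((C ^ n : ℕ) : ℝ≥0∞) * (((C : ℕ) : ℝ≥0∞)
            * ((M (z₀ - zN) : ℕ) : ℝ≥0∞)⁻¹ ^ ((d - 1) + (d - n) - d)) := by
          refine mul_le_mul' le_rfl ?_
          exact conv (d - 1) (d - n) hd (by omega) (by omega) (by omega) (by omega) (by omega)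
            (z₀ - zN)
        _ = ((C ^ (n + 1) : ℕ) : ℝ≥0∞)
            * ((M (z₀ - zN) : ℕ) : ℝ≥0∞)⁻¹ ^ (d - (n + 1)) := by
          have he : (d - 1) + (d - n) - d = d - (n + 1) := by omega
          rw [he]
          push_cast
          ring

end Stmt0Aux

open Stmt0Aux in
theorem stmt0 (d n : ℕ) (hd : 3 ≤ d) (hn : 1 ≤ n) (hnd : n ≤ d - 1) :
    ∃ c : ℝ, 0 < c ∧
      ∀ z₀ zN : Fin d → ℤ, z₀ ≠ zN →
        (∑' w : {w : Fin (n + 1) → Fin d → ℤ // w 0 = z₀ ∧ w (Fin.last n) = zN},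
            ENNReal.ofReal (∏ i : Fin n, latticeKernel (w.1 i.castSucc - w.1 i.succ)))
          ≤ ENNReal.ofReal (c / ‖latticeEmbed (z₀ - zN)‖ ^ (d - n)) := by
  classical
  have hd1 : 1 ≤ d := by omega
  set C0 : ℕ := (2 ^ (d + 2) * (3 * KK d + 2)) ^ n with hC0
  set C : ℕ := C0 * d ^ d + 1 with hCdef
  refine ⟨(C : ℝ), by positivity, ?_⟩
  intro z₀ zN hne
  have hx : z₀ - zN ≠ 0 := sub_ne_zero.mpr hne
  set x : Fin d → ℤ := z₀ - zN with hxdef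
  set k : ℕ := d - n with hk
  have hsn1 : 1 ≤ sn x := by
    rcases Nat.eq_zero_or_pos (sn x) with h0 | h0
    · exact absurd (sn_eq_zero_iff.mp h0) hx
    · exact h0
  have hxnorm : (0 : ℝ) < ‖latticeEmbed x‖ := by
    have : (1 : ℝ) ≤ ‖latticeEmbed x‖ := by
      calc (1 : ℝ) ≤ (sn x : ℝ) := by exact_mod_cast hsn1
        _ ≤ ‖latticeEmbed x‖ := sn_le_norm hd1 x
    linarith
  have hnormk : ENNReal.ofReal (‖latticeEmbed x‖ ^ k) ≤ (((d * M x : ℕ)) : ℝ≥0∞) ^ k := by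
    have h1 : ‖latticeEmbed x‖ ^ k ≤ (((d * M x : ℕ)) : ℝ) ^ k := by
      refine pow_le_pow_left₀ (norm_nonneg _) ?_ k
      push_cast
      exact norm_le_d_mul_M hd1 x
    calc ENNReal.ofReal (‖latticeEmbed x‖ ^ k) ≤ ENNReal.ofReal ((((d * M x : ℕ)) : ℝ) ^ k) :=
        ENNReal.ofReal_le_ofReal h1
      _ = (((d * M x : ℕ)) : ℝ≥0∞) ^ k := by
        rw [ENNReal.ofReal_pow (by positivity), ENNReal.ofReal_natCast]
  calc (∑' w : {w : Fin (n + 1) → Fin d → ℤ // w 0 = z₀ ∧ w (Fin.last n) = zN},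
        ENNReal.ofReal (∏ i : Fin n, latticeKernel (w.1 i.castSucc - w.1 i.succ)))
      = (∑' w : {w : Fin (n + 1) → Fin d → ℤ // w 0 = z₀ ∧ w (Fin.last n) = zN},
        ∏ i : Fin n, kerE (w.1 i.castSucc - w.1 i.succ)) := by
        refine tsum_congr fun w => ?_
        exact ENNReal.ofReal_prod_of_nonneg fun i _ => latticeKernel_nonneg _
    _ ≤ ((C0 : ℕ) : ℝ≥0∞) * ((M x : ℕ) : ℝ≥0∞)⁻¹ ^ k :=
      path_bound hd n hn (by omega) z₀ zN
    _ ≤ ENNReal.ofReal ((C : ℝ) / ‖latticeEmbed x‖ ^ k) := by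
      rw [ENNReal.ofReal_div_of_pos (by positivity)]
      rw [ENNReal.le_div_iff_mul_le
        (Or.inl (ENNReal.ofReal_pos.mpr (pow_pos hxnorm k)).ne')
        (Or.inl ENNReal.ofReal_ne_top)]
      calc ((C0 : ℕ) : ℝ≥0∞) * ((M x : ℕ) : ℝ≥0∞)⁻¹ ^ k * ENNReal.ofReal (‖latticeEmbed x‖ ^ k)
          ≤ ((C0 : ℕ) : ℝ≥0∞) * ((M x : ℕ) : ℝ≥0∞)⁻¹ ^ k * (((d * M x : ℕ)) : ℝ≥0∞) ^ k :=
          mul_le_mul_right hnormk _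
        _ = ((C0 : ℕ) : ℝ≥0∞) * ((d : ℝ≥0∞)) ^ k
            * (((M x : ℕ) : ℝ≥0∞)⁻¹ * ((M x : ℕ) : ℝ≥0∞)) ^ k := by
          push_cast
          rw [mul_pow ((d:ℝ≥0∞)) _, mul_pow]
          ring
        _ = ((C0 : ℕ) : ℝ≥0∞) * ((d : ℝ≥0∞)) ^ k := by
          rw [ENNReal.inv_mul_cancel (M_cast_ne_zero x) (ENNReal.natCast_ne_top _), one_pow,
            mul_one]
        _ ≤ ENNReal.ofReal (C : ℝ) := by
          rw [ENNReal.ofReal_natCast]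
          have hnat : C0 * d ^ k ≤ C := by
            have : d ^ k ≤ d ^ d := Nat.pow_le_pow_right (by omega) (by omega)
            calc C0 * d ^ k ≤ C0 * d ^ d := Nat.mul_le_mul_left _ this
              _ ≤ C := by omega
          exact_mod_cast hnat
end

section
/- Let d ≥ 3 and r ≥ 10. Let x = (r, 0, …, 0) ∈ ℝ^d and for each integer i with 2 ≤ i ≤ ⌊r⌋ let D_i = B((0, i, 0, …, 0), 1/8) be the closed ball of radius 1/8 centered at (0, i, 0, …, 0). Then for all integers i ≠ j in {2, …, ⌊r⌋}, no line in ℝ^d intersects all three of the sets B(x,1), D_i and D_j. In other words, the sets of lines meeting both B(x,1) and D_i, for i = 2, …, ⌊r⌋, are pairwise disjoint. -/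
/-- A line in `ℝ^d`: a set of the form `{a + t • v : t ∈ ℝ}` with `v ≠ 0`. -/
def IsLine {d : ℕ} (L : Set (EuclideanSpace ℝ (Fin d))) : Prop :=
  ∃ a v : EuclideanSpace ℝ (Fin d), v ≠ 0 ∧ L = {x | ∃ t : ℝ, x = a + t • v}

lemma coord_bound {d : ℕ} (x c : EuclideanSpace ℝ (Fin d)) (ρ : ℝ)
    (hx : x ∈ Metric.closedBall c ρ) (k : Fin d) : |x k - c k| ≤ ρ := by
  rw [Metric.mem_closedBall] at hx
  refine le_trans ?_ hx
  rw [EuclideanSpace.dist_eq]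
  have h1 : |x k - c k| = Real.sqrt (dist (x k) (c k) ^ 2) := by
    rw [Real.sqrt_sq_eq_abs, Real.dist_eq, abs_abs]
  rw [h1]
  apply Real.sqrt_le_sqrt
  exact Finset.single_le_sum (f := fun i => dist (x i) (c i) ^ 2)
    (fun i _ => sq_nonneg _) (Finset.mem_univ k)

theorem stmt8 (d : ℕ) (hd : 3 ≤ d) (r : ℝ) (hr : 10 ≤ r)
    (i j : ℤ) (hi2 : 2 ≤ i) (hir : i ≤ ⌊r⌋) (hj2 : 2 ≤ j) (hjr : j ≤ ⌊r⌋) (hij : i ≠ j)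
    (L : Set (EuclideanSpace ℝ (Fin d))) (hL : IsLine L) :
    ¬ ((L ∩ Metric.closedBall (EuclideanSpace.single (⟨0, by omega⟩ : Fin d) r) 1).Nonempty ∧
       (L ∩ Metric.closedBall
          (EuclideanSpace.single (⟨1, by omega⟩ : Fin d) (i : ℝ)) (1 / 8)).Nonempty ∧
       (L ∩ Metric.closedBall
          (EuclideanSpace.single (⟨1, by omega⟩ : Fin d) (j : ℝ)) (1 / 8)).Nonempty) := by
  rintro ⟨⟨A, hAL, hA⟩, ⟨P, hPL, hP⟩, ⟨Q, hQL, hQ⟩⟩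
  obtain ⟨a, v, hv, rfl⟩ := hL
  obtain ⟨tA, rfl⟩ := hAL
  obtain ⟨tP, rfl⟩ := hPL
  obtain ⟨tQ, rfl⟩ := hQL
  set e0 : Fin d := ⟨0, by omega⟩ with he0
  set e1 : Fin d := ⟨1, by omega⟩ with he1
  have hne : e1 ≠ e0 := by simp [he0, he1, Fin.ext_iff]
  have hne' : e0 ≠ e1 := hne.symm
  -- coordinates of ball centers
  have hs0 : ∀ ρ : ℝ, (EuclideanSpace.single e0 ρ) e0 = ρ := by
    intro ρ; simp [EuclideanSpace.single_apply]
  have hs01 : ∀ ρ : ℝ, (EuclideanSpace.single e0 ρ) e1 = 0 := by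
    intro ρ; simp [EuclideanSpace.single_apply, hne]
  have hs1 : ∀ ρ : ℝ, (EuclideanSpace.single e1 ρ) e1 = ρ := by
    intro ρ; simp [EuclideanSpace.single_apply]
  have hs10 : ∀ ρ : ℝ, (EuclideanSpace.single e1 ρ) e0 = 0 := by
    intro ρ; simp [EuclideanSpace.single_apply, hne']
  -- coordinate bounds
  have hA0 := coord_bound _ _ _ hA e0
  have hA1 := coord_bound _ _ _ hA e1
  have hP0 := coord_bound _ _ _ hP e0
  have hP1 := coord_bound _ _ _ hP e1
  have hQ0 := coord_bound _ _ _ hQ e0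
  have hQ1 := coord_bound _ _ _ hQ e1
  rw [hs0] at hA0
  rw [hs01, sub_zero] at hA1
  rw [hs10, sub_zero] at hP0
  rw [hs1] at hP1
  rw [hs10, sub_zero] at hQ0
  rw [hs1] at hQ1
  -- evaluation of points
  have heval : ∀ (t : ℝ) (k : Fin d), (a + t • v) k = a k + t * v k := by
    intro t k; simp [PiLp.add_apply, PiLp.smul_apply, smul_eq_mul]
  set a0 := (a + tA • v) e0
  set a1 := (a + tA • v) e1
  set p0 := (a + tP • v) e0
  set p1 := (a + tP • v) e1
  set q0 := (a + tQ • v) e0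
  set q1 := (a + tQ • v) e1
  -- collinearity: cross product vanishes
  have hcol : (p0 - a0) * (q1 - a1) = (q0 - a0) * (p1 - a1) := by
    simp only [a0, a1, p0, p1, q0, q1, heval]
    ring
  -- i, j ≤ r
  have hirR : (i : ℝ) ≤ r := le_trans (by exact_mod_cast hir) (Int.floor_le r)
  have hjrR : (j : ℝ) ≤ r := le_trans (by exact_mod_cast hjr) (Int.floor_le r)
  have hi2R : (2 : ℝ) ≤ (i : ℝ) := by exact_mod_cast hi2
  have hj2R : (2 : ℝ) ≤ (j : ℝ) := by exact_mod_cast hj2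
  have habs : (1 : ℝ) ≤ |(i : ℝ) - (j : ℝ)| := by
    have : (1 : ℤ) ≤ |i - j| := Int.one_le_abs (sub_ne_zero.mpr hij)
    calc (1:ℝ) ≤ ((|i - j| : ℤ) : ℝ) := by exact_mod_cast this
    _ = |(i : ℝ) - (j : ℝ)| := by push_cast [Int.cast_abs]; ring_nf
  rw [abs_le] at hA0 hA1 hP0 hP1 hQ0 hQ1
  obtain ⟨hA0l, hA0r⟩ := hA0
  obtain ⟨hA1l, hA1r⟩ := hA1
  obtain ⟨hP0l, hP0r⟩ := hP0
  obtain ⟨hP1l, hP1r⟩ := hP1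
  obtain ⟨hQ0l, hQ0r⟩ := hQ0
  obtain ⟨hQ1l, hQ1r⟩ := hQ1
  rcases abs_cases ((i : ℝ) - (j : ℝ)) with ⟨heq, _⟩ | ⟨heq, _⟩ <;> rw [heq] at habs
  · -- i - j ≥ 1, so p1 - q1 ≥ 3/4
    nlinarith [mul_le_mul_of_nonneg_left (show q1 - p1 ≤ -(3/4 : ℝ) by linarith)
        (show (0:ℝ) ≤ a0 by linarith),
      sq_nonneg (p0 - q0), sq_nonneg (p1 - q1)]
  · nlinarith [mul_le_mul_of_nonneg_left (show p1 - q1 ≤ -(3/4 : ℝ) by linarith)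
        (show (0:ℝ) ≤ a0 by linarith),
      sq_nonneg (p0 - q0), sq_nonneg (p1 - q1)]
end
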